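/- Let σ < τ be reals, let 0 < ρ < λ and r > 0, and let a : [σ,τ] → [0,∞) be Lebesgue integrable. Let φ : [σ,τ] → ℝ be of class C¹ with φ'(x) = φ'(σ) − λ·∫_σ^x a(ξ)φ(ξ) dξ for all x ∈ [σ,τ], φ(σ) = φ(τ) = 0, and φ(x) ≥ 0 for all x ∈ [σ,τ]. Let G : [0,∞) → [0,∞) be continuous with G(0) = 0 and G(s) < (λ−ρ)·s for all 0 < s ≤ r. Let u : [σ,τ] → [0,r] be of class C¹ with u'(x) = u'(σ) − ∫_σ^x a(ξ)G(u(ξ)) dξ for all x ∈ [σ,τ], and with max_{x∈[σ,τ]} u(x) = r. Then (sup_{x∈[σ,τ]} |φ'(x)|)·(u(σ) + u(τ)) ≥ (ρ·r/(τ−σ))·∫_σ^τ min{x−σ, τ−x}·a(x)·φ(x) dx. -/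

import Mathlib

open Set MeasureTheory

lemma aux_int {σ τ : ℝ} (hστ : σ ≤ τ) {a c : ℝ → ℝ} (ha : IntegrableOn a (Icc σ τ))
    (hc : ContinuousOn c (Icc σ τ)) : IntegrableOn (fun x => a x * c x) (Ioc σ τ) := by
  have h1 : IntervalIntegrable a volume σ τ :=
    (intervalIntegrable_iff_integrableOn_Icc_of_le hστ).mpr ha
  have h2 := h1.mul_continuousOn (g := c) (by rwa [uIcc_of_le hστ])
  exact (intervalIntegrable_iff_integrableOn_Ioc_of_le hστ).mp h2

lemma my_ftc {σ τ : ℝ} {h h' : ℝ → ℝ}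
    (hd : ∀ x ∈ Icc σ τ, HasDerivWithinAt h (h' x) (Icc σ τ) x)
    (hc : ContinuousOn h' (Icc σ τ)) {ξ η : ℝ} (hξ : ξ ∈ Icc σ τ) (hη : η ∈ Icc σ τ)
    (hle : ξ ≤ η) : ∫ x in Ioc ξ η, h' x = h η - h ξ := by
  have hsub : Icc ξ η ⊆ Icc σ τ := Icc_subset_Icc hξ.1 hη.2
  rw [← intervalIntegral.integral_of_le hle]
  apply intervalIntegral.integral_eq_sub_of_hasDeriv_right_of_le hle
  · exact fun x hx => (hd x (hsub hx)).continuousWithinAt.mono hsub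
  · intro x hx
    have hxm : x ∈ Icc σ τ := hsub (Ioo_subset_Icc_self hx)
    have hmem : Icc σ τ ∈ nhds x :=
      Icc_mem_nhds (lt_of_le_of_lt hξ.1 hx.1) (lt_of_lt_of_le hx.2 hη.2)
    exact ((hd x hxm).hasDerivAt hmem).hasDerivWithinAt
  · exact ((hc.mono hsub).intervalIntegrable_of_Icc hle)

lemma my_swap {σ τ : ℝ} (hστ : σ ≤ τ) {w g : ℝ → ℝ}
    (hw : IntegrableOn w (Ioc σ τ)) (hg : IntegrableOn g (Ioc σ τ)) :
    ∫ x in Ioc σ τ, g x * (∫ ξ in Ioc σ x, w ξ) =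
      ∫ ξ in Ioc σ τ, w ξ * (∫ x in Icc ξ τ, g x) := by
  set μ := volume.restrict (Ioc σ τ) with hμ
  have hmeas : MeasurableSet {q : ℝ × ℝ | q.2 ≤ q.1} :=
    measurableSet_le measurable_snd measurable_fst
  have hbase : Integrable (fun q : ℝ × ℝ => g q.1 * w q.2) (μ.prod μ) := hg.mul_prod hw
  have hF : Integrable ({q : ℝ × ℝ | q.2 ≤ q.1}.indicator fun q => g q.1 * w q.2) (μ.prod μ) :=
    hbase.indicator hmeas
  have hswap := MeasureTheory.integral_integral_swap
    (f := fun x ξ => ({q : ℝ × ℝ | q.2 ≤ q.1}.indicator fun q => g q.1 * w q.2) (x, ξ)) hF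
  have hL : (∫ x, (∫ ξ,
      ({q : ℝ × ℝ | q.2 ≤ q.1}.indicator fun q => g q.1 * w q.2) (x, ξ) ∂μ) ∂μ)
      = ∫ x in Ioc σ τ, g x * (∫ ξ in Ioc σ x, w ξ) := by
    refine setIntegral_congr_fun measurableSet_Ioc fun x hx => ?_
    have h1 : (fun ξ => ({q : ℝ × ℝ | q.2 ≤ q.1}.indicator fun q => g q.1 * w q.2) (x, ξ))
        = (Iic x).indicator (fun ξ => g x * w ξ) := by
      ext ξ; by_cases h : ξ ≤ x <;> simp [Set.indicator, h]
    rw [hμ, h1, integral_indicator measurableSet_Iic,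
      Measure.restrict_restrict measurableSet_Iic, Set.inter_comm, Set.Ioc_inter_Iic,
      min_eq_right hx.2, integral_const_mul]
  have hR : (∫ ξ, (∫ x,
      ({q : ℝ × ℝ | q.2 ≤ q.1}.indicator fun q => g q.1 * w q.2) (x, ξ) ∂μ) ∂μ)
      = ∫ ξ in Ioc σ τ, w ξ * (∫ x in Icc ξ τ, g x) := by
    refine setIntegral_congr_fun measurableSet_Ioc fun ξ hξ => ?_
    have h1 : (fun x => ({q : ℝ × ℝ | q.2 ≤ q.1}.indicator fun q => g q.1 * w q.2) (x, ξ))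
        = (Ici ξ).indicator (fun x => g x * w ξ) := by
      ext x; by_cases h : ξ ≤ x <;> simp [Set.indicator, h]
    have h2 : Ici ξ ∩ Ioc σ τ = Icc ξ τ := by
      ext y
      simp only [Set.mem_inter_iff, Set.mem_Ici, Set.mem_Ioc, Set.mem_Icc]
      constructor
      · rintro ⟨h1, h2, h3⟩; exact ⟨h1, h3⟩
      · rintro ⟨h1, h3⟩; exact ⟨h1, lt_of_lt_of_le hξ.1 h1, h3⟩
    rw [hμ, h1, integral_indicator measurableSet_Ici,
      Measure.restrict_restrict measurableSet_Ici, h2, integral_mul_const, mul_comm]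
  rw [hμ] at hswap
  rw [← hL, ← hR]
  exact hswap

lemma concave_chord {σ τ r : ℝ} {u : ℝ → ℝ} (hστ : σ < τ)
    (hconc : ConcaveOn ℝ (Icc σ τ) u) (huσ : 0 ≤ u σ) (huτ : 0 ≤ u τ)
    {x₀ : ℝ} (hx₀ : x₀ ∈ Icc σ τ) (hr : 0 ≤ r) (hux₀ : r ≤ u x₀)
    {x : ℝ} (hx : x ∈ Icc σ τ) :
    r * min (x - σ) (τ - x) / (τ - σ) ≤ u x := by
  have hτσ : (0:ℝ) < τ - σ := by linarith
  rcases le_total x x₀ with hcase | hcase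
  · rcases eq_or_lt_of_le (hx.1 : σ ≤ x) with he | hlt
    · rw [← he]
      have hmin : min (σ - σ) (τ - σ) = 0 := by
        rw [min_eq_left] <;> simp [le_of_lt hτσ]
      rw [hmin]; simpa using huσ
    · have hσx₀ : σ < x₀ := lt_of_lt_of_le hlt hcase
      set t := (x - σ) / (x₀ - σ) with ht
      have hx₀σ : (0:ℝ) < x₀ - σ := by linarith
      have ht0 : 0 ≤ t := div_nonneg (by linarith) hx₀σ.le
      have ht1 : t ≤ 1 := by rw [div_le_one hx₀σ]; linarith
      have hcomb := hconc.2 (left_mem_Icc.mpr hστ.le) hx₀ (show (0:ℝ) ≤ 1 - t by linarith) ht0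
        (show (1 - t) + t = 1 by ring)
      have hxeq : (1 - t) • σ + t • x₀ = x := by
        simp only [smul_eq_mul]; rw [ht]; field_simp; ring
      rw [hxeq] at hcomb
      simp only [smul_eq_mul] at hcomb
      have h1 : t * r ≤ u x := by nlinarith
      have hux : 0 ≤ u x := le_trans (mul_nonneg ht0 hr) h1
      have h4 : (x - σ) * r ≤ u x * (x₀ - σ) := by
        rw [ht, div_mul_eq_mul_div, div_le_iff₀ hx₀σ] at h1; linarith
      rw [div_le_iff₀ hτσ]
      have h2 : min (x - σ) (τ - x) ≤ x - σ := min_le_left _ _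
      nlinarith [mul_nonneg hr (sub_nonneg.mpr hlt.le), hx₀.2]
  · rcases eq_or_lt_of_le (hx.2 : x ≤ τ) with he | hlt
    · rw [he]
      have hmin : min (τ - σ) (τ - τ) = 0 := by
        rw [min_eq_right] <;> simp [le_of_lt hτσ]
      rw [hmin]; simpa using huτ
    · have hx₀τ : x₀ < τ := lt_of_le_of_lt hcase hlt
      set t := (τ - x) / (τ - x₀) with ht
      have hτx₀ : (0:ℝ) < τ - x₀ := by linarith
      have ht0 : 0 ≤ t := div_nonneg (by linarith) hτx₀.le
      have ht1 : t ≤ 1 := by rw [div_le_one hτx₀]; linarith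
      have hcomb := hconc.2 hx₀ (right_mem_Icc.mpr hστ.le) ht0 (show (0:ℝ) ≤ 1 - t by linarith)
        (show t + (1 - t) = 1 by ring)
      have hxeq : t • x₀ + (1 - t) • τ = x := by
        simp only [smul_eq_mul]; rw [ht]; field_simp; ring
      rw [hxeq] at hcomb
      simp only [smul_eq_mul] at hcomb
      have h1 : t * r ≤ u x := by nlinarith
      have hux : 0 ≤ u x := le_trans (mul_nonneg ht0 hr) h1
      have h4 : (τ - x) * r ≤ u x * (τ - x₀) := by
        rw [ht, div_mul_eq_mul_div, div_le_iff₀ hτx₀] at h1; linarith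
      rw [div_le_iff₀ hτσ]
      have h2 : min (x - σ) (τ - x) ≤ τ - x := min_le_right _ _
      nlinarith [mul_nonneg hr (sub_nonneg.mpr hlt.le), hx₀.1]

/-- Lower bound for the boundary values of a solution in terms of the
principal eigenfunction: with `φ` a nonnegative Dirichlet eigenfunction of
`φ'' + λ a(x) φ = 0` on `[σ,τ]`, `G(s) < (λ-ρ)s` for `0 < s ≤ r`, and `u : [σ,τ] → [0,r]`
a solution of `u'' + a(x) G(u) = 0` with maximum `r`, one has
`(sup |φ'|)·(u(σ)+u(τ)) ≥ (ρ r/(τ-σ)) ∫_σ^τ min{x-σ, τ-x} a(x) φ(x) dx`. -/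
theorem boundary_lower_bound_via_eigenfunction
    (σ τ : ℝ) (hστ : σ < τ)
    (ρ lam r : ℝ) (hρ : 0 < ρ) (hρlam : ρ < lam) (hr : 0 < r)
    (a : ℝ → ℝ) (ha_int : IntegrableOn a (Set.Icc σ τ)) (ha_nonneg : ∀ x, 0 ≤ a x)
    (φ φ' : ℝ → ℝ)
    (hφ_deriv : ∀ x ∈ Set.Icc σ τ, HasDerivWithinAt φ (φ' x) (Set.Icc σ τ) x)
    (hφ'_cont : ContinuousOn φ' (Set.Icc σ τ))
    (hφ'_eq : ∀ x ∈ Set.Icc σ τ, φ' x = φ' σ - lam * ∫ ξ in σ..x, a ξ * φ ξ)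
    (hφσ : φ σ = 0) (hφτ : φ τ = 0)
    (hφ_nonneg : ∀ x ∈ Set.Icc σ τ, 0 ≤ φ x)
    (G : ℝ → ℝ) (hG_cont : ContinuousOn G (Set.Ici 0))
    (hG_nonneg : ∀ s, 0 ≤ s → 0 ≤ G s) (hG0 : G 0 = 0)
    (hG_lt : ∀ s, 0 < s → s ≤ r → G s < (lam - ρ) * s)
    (u u' : ℝ → ℝ)
    (hu_deriv : ∀ x ∈ Set.Icc σ τ, HasDerivWithinAt u (u' x) (Set.Icc σ τ) x)
    (hu'_cont : ContinuousOn u' (Set.Icc σ τ))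
    (hu_range : ∀ x ∈ Set.Icc σ τ, 0 ≤ u x ∧ u x ≤ r)
    (hu'_eq : ∀ x ∈ Set.Icc σ τ, u' x = u' σ - ∫ ξ in σ..x, a ξ * G (u ξ))
    (hu_max : ∃ x ∈ Set.Icc σ τ, u x = r) :
    ρ * r / (τ - σ) * ∫ x in σ..τ, (min (x - σ) (τ - x)) * a x * φ x ≤
      (sSup ((fun x => |φ' x|) '' Set.Icc σ τ)) * (u σ + u τ) := by
  have hle : σ ≤ τ := hστ.le
  have hmemσ : σ ∈ Icc σ τ := left_mem_Icc.mpr hle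
  have hmemτ : τ ∈ Icc σ τ := right_mem_Icc.mpr hle
  have hφc : ContinuousOn φ (Icc σ τ) := fun x hx => (hφ_deriv x hx).continuousWithinAt
  have huc : ContinuousOn u (Icc σ τ) := fun x hx => (hu_deriv x hx).continuousWithinAt
  have hGuc : ContinuousOn (fun ξ => G (u ξ)) (Icc σ τ) :=
    hG_cont.comp huc fun x hx => (hu_range x hx).1
  -- integrabilities
  have hf_icc : IntegrableOn (fun ξ => a ξ * φ ξ) (Icc σ τ) := by
    have h1 : IntervalIntegrable a volume σ τ :=
      (intervalIntegrable_iff_integrableOn_Icc_of_le hle).mpr ha_int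
    exact (intervalIntegrable_iff_integrableOn_Icc_of_le hle).mp
      (h1.mul_continuousOn (g := φ) (by rwa [uIcc_of_le hle]))
  have hf_int : IntegrableOn (fun ξ => a ξ * φ ξ) (Ioc σ τ) := aux_int hle ha_int hφc
  have hg_icc : IntegrableOn (fun ξ => a ξ * G (u ξ)) (Icc σ τ) := by
    have h1 : IntervalIntegrable a volume σ τ :=
      (intervalIntegrable_iff_integrableOn_Icc_of_le hle).mpr ha_int
    exact (intervalIntegrable_iff_integrableOn_Icc_of_le hle).mp
      (h1.mul_continuousOn (g := fun ξ => G (u ξ)) (by rwa [uIcc_of_le hle]))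
  have hg_int : IntegrableOn (fun ξ => a ξ * G (u ξ)) (Ioc σ τ) := aux_int hle ha_int hGuc
  have hu'_int : IntegrableOn u' (Ioc σ τ) :=
    (hu'_cont.integrableOn_Icc).mono_set Ioc_subset_Icc_self
  have hφ'_int : IntegrableOn φ' (Ioc σ τ) :=
    (hφ'_cont.integrableOn_Icc).mono_set Ioc_subset_Icc_self
  -- FTC facts
  have hu_ftc : ∀ ξ ∈ Icc σ τ, ∫ x in Ioc ξ τ, u' x = u τ - u ξ :=
    fun ξ hξ => my_ftc hu_deriv hu'_cont hξ hmemτ hξ.2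
  have hφ_ftc : ∀ ξ ∈ Icc σ τ, ∫ x in Ioc ξ τ, φ' x = φ τ - φ ξ :=
    fun ξ hξ => my_ftc hφ_deriv hφ'_cont hξ hmemτ hξ.2
  -- primitives are continuous
  have hPf_cont : ContinuousOn (fun x => ∫ ξ in Ioc σ x, a ξ * φ ξ) (Icc σ τ) :=
    intervalIntegral.continuousOn_primitive hf_icc
  have hPg_cont : ContinuousOn (fun x => ∫ ξ in Ioc σ x, a ξ * G (u ξ)) (Icc σ τ) :=
    intervalIntegral.continuousOn_primitive hg_icc
  have hu'Pf_int : IntegrableOn (fun x => u' x * ∫ ξ in Ioc σ x, a ξ * φ ξ) (Ioc σ τ) :=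
    ((hu'_cont.mul hPf_cont).integrableOn_Icc).mono_set Ioc_subset_Icc_self
  have hφ'Pg_int : IntegrableOn (fun x => φ' x * ∫ ξ in Ioc σ x, a ξ * G (u ξ)) (Ioc σ τ) :=
    ((hφ'_cont.mul hPg_cont).integrableOn_Icc).mono_set Ioc_subset_Icc_self
  -- abbreviations
  set If := ∫ ξ in Ioc σ τ, a ξ * φ ξ with hIf
  set Ifu := ∫ ξ in Ioc σ τ, a ξ * φ ξ * u ξ with hIfu
  set Igφ := ∫ ξ in Ioc σ τ, a ξ * G (u ξ) * φ ξ with hIgφ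
  have hfu_int : IntegrableOn (fun ξ => a ξ * φ ξ * u ξ) (Ioc σ τ) := by
    have := aux_int hle ha_int (hφc.mul huc)
    exact this.congr_fun (fun x _ => by simp only [Pi.mul_apply]; ring) measurableSet_Ioc
  have hgφ_int : IntegrableOn (fun ξ => a ξ * G (u ξ) * φ ξ) (Ioc σ τ) := by
    have := aux_int hle ha_int (hGuc.mul hφc)
    exact this.congr_fun (fun x _ => by simp only [Pi.mul_apply]; ring) measurableSet_Ioc
  -- Green identity part 1: A computed with φ' expanded
  set A := ∫ x in Ioc σ τ, u' x * φ' x with hA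
  have eqA1 : A = φ' σ * (u τ - u σ) - lam * (u τ * If - Ifu) := by
    have e1 : A = ∫ x in Ioc σ τ,
        (φ' σ * u' x - lam * (u' x * ∫ ξ in Ioc σ x, a ξ * φ ξ)) := by
      refine setIntegral_congr_fun measurableSet_Ioc fun x hx => ?_
      rw [hφ'_eq x (Ioc_subset_Icc_self hx), intervalIntegral.integral_of_le hx.1.le]
      ring
    have e2 : ∫ x in Ioc σ τ,
        (φ' σ * u' x - lam * (u' x * ∫ ξ in Ioc σ x, a ξ * φ ξ))
        = φ' σ * (∫ x in Ioc σ τ, u' x)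
          - lam * ∫ x in Ioc σ τ, (u' x * ∫ ξ in Ioc σ x, a ξ * φ ξ) := by
      rw [integral_sub (hu'_int.const_mul _) (hu'Pf_int.const_mul _),
        integral_const_mul, integral_const_mul]
    have e3 : (∫ x in Ioc σ τ, (u' x * ∫ ξ in Ioc σ x, a ξ * φ ξ)) = u τ * If - Ifu := by
      rw [my_swap hle hf_int hu'_int]
      have e4 : (∫ ξ in Ioc σ τ, (a ξ * φ ξ) * (∫ x in Icc ξ τ, u' x))
          = ∫ ξ in Ioc σ τ, (u τ * (a ξ * φ ξ) - a ξ * φ ξ * u ξ) := by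
        refine setIntegral_congr_fun measurableSet_Ioc fun ξ hξ => ?_
        rw [integral_Icc_eq_integral_Ioc, hu_ftc ξ (Ioc_subset_Icc_self hξ)]
        ring
      rw [e4, integral_sub (hf_int.const_mul _) hfu_int, integral_const_mul]
    rw [e1, e2, e3, hu_ftc σ hmemσ]
  -- Green identity part 2
  have eqA2 : A = Igφ := by
    have e1 : A = ∫ x in Ioc σ τ,
        (u' σ * φ' x - (φ' x * ∫ ξ in Ioc σ x, a ξ * G (u ξ))) := by
      refine setIntegral_congr_fun measurableSet_Ioc fun x hx => ?_
      rw [hu'_eq x (Ioc_subset_Icc_self hx), intervalIntegral.integral_of_le hx.1.le]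
      ring
    have e2 : ∫ x in Ioc σ τ,
        (u' σ * φ' x - (φ' x * ∫ ξ in Ioc σ x, a ξ * G (u ξ)))
        = u' σ * (∫ x in Ioc σ τ, φ' x)
          - ∫ x in Ioc σ τ, (φ' x * ∫ ξ in Ioc σ x, a ξ * G (u ξ)) := by
      rw [integral_sub (hφ'_int.const_mul _) hφ'Pg_int, integral_const_mul]
    have e3 : (∫ x in Ioc σ τ, (φ' x * ∫ ξ in Ioc σ x, a ξ * G (u ξ))) = - Igφ := by
      rw [my_swap hle hg_int hφ'_int]
      have e4 : (∫ ξ in Ioc σ τ, (a ξ * G (u ξ)) * (∫ x in Icc ξ τ, φ' x))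
          = ∫ ξ in Ioc σ τ, (-(a ξ * G (u ξ) * φ ξ)) := by
        refine setIntegral_congr_fun measurableSet_Ioc fun ξ hξ => ?_
        rw [integral_Icc_eq_integral_Ioc, hφ_ftc ξ (Ioc_subset_Icc_self hξ), hφτ]
        ring
      rw [e4, integral_neg]
    rw [e1, e2, e3, hφ_ftc σ hmemσ, hφσ, hφτ]
    ring
  -- φ'(τ)
  have hφ'τ : φ' τ = φ' σ - lam * If := by
    rw [hφ'_eq τ hmemτ, intervalIntegral.integral_of_le hle, hIf]
  -- the key identity (★)
  have star : lam * Ifu - Igφ = u σ * φ' σ - u τ * φ' τ := by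
    have h := eqA1.symm.trans eqA2
    rw [hφ'τ]; linear_combination h
  -- Inequality 1 : ρ * Ifu ≤ lam * Ifu - Igφ
  have ineq1 : ρ * Ifu ≤ lam * Ifu - Igφ := by
    have key : 0 ≤ ∫ ξ in Ioc σ τ, ((lam - ρ) * (a ξ * φ ξ * u ξ) - a ξ * G (u ξ) * φ ξ) := by
      refine setIntegral_nonneg measurableSet_Ioc fun ξ hξ => ?_
      have hξ' : ξ ∈ Icc σ τ := Ioc_subset_Icc_self hξ
      have hu0 : 0 ≤ u ξ := (hu_range ξ hξ').1
      have haφ : 0 ≤ a ξ * φ ξ := mul_nonneg (ha_nonneg ξ) (hφ_nonneg ξ hξ')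
      have hG' : G (u ξ) ≤ (lam - ρ) * u ξ := by
        rcases eq_or_lt_of_le hu0 with he | hlt
        · rw [← he, hG0]; simp
        · exact (hG_lt (u ξ) hlt (hu_range ξ hξ').2).le
      nlinarith
    have expand : (∫ ξ in Ioc σ τ, ((lam - ρ) * (a ξ * φ ξ * u ξ) - a ξ * G (u ξ) * φ ξ))
        = (lam - ρ) * Ifu - Igφ := by
      rw [integral_sub (hfu_int.const_mul _) hgφ_int, integral_const_mul]
    rw [expand] at key
    linarith
  -- Inequality 2 : boundary terms bounded by sup of |φ'|
  set M := sSup ((fun x => |φ' x|) '' Icc σ τ) with hM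
  have hbdd : BddAbove ((fun x => |φ' x|) '' Icc σ τ) :=
    (isCompact_Icc.image_of_continuousOn (continuous_abs.comp_continuousOn hφ'_cont)).bddAbove
  have hMσ : |φ' σ| ≤ M := le_csSup hbdd ⟨σ, hmemσ, rfl⟩
  have hMτ : |φ' τ| ≤ M := le_csSup hbdd ⟨τ, hmemτ, rfl⟩
  have huσ : 0 ≤ u σ := (hu_range σ hmemσ).1
  have huτ : 0 ≤ u τ := (hu_range τ hmemτ).1
  have ineq2 : u σ * φ' σ - u τ * φ' τ ≤ M * (u σ + u τ) := by
    have h1 : φ' σ ≤ M := (le_abs_self _).trans hMσ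
    have h2 : -M ≤ φ' τ := (neg_le_neg hMτ).trans (neg_abs_le _)
    nlinarith
  -- concavity of u
  have hder : ∀ x ∈ Ioo σ τ, HasDerivAt u (u' x) x := fun x hx =>
    (hu_deriv x (Ioo_subset_Icc_self hx)).hasDerivAt (Icc_mem_nhds hx.1 hx.2)
  have hgg_ii : IntervalIntegrable (fun ξ => a ξ * G (u ξ)) volume σ τ :=
    (intervalIntegrable_iff_integrableOn_Icc_of_le hle).mpr hg_icc
  have hconc : ConcaveOn ℝ (Icc σ τ) u := by
    refine AntitoneOn.concaveOn_of_deriv (convex_Icc σ τ) huc ?_ ?_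
    · rw [interior_Icc]
      exact fun x hx => (hder x hx).differentiableAt.differentiableWithinAt
    · rw [interior_Icc]
      intro x hx y hy hxy
      rw [(hder x hx).deriv, (hder y hy).deriv]
      have hxm : x ∈ Icc σ τ := Ioo_subset_Icc_self hx
      have hym : y ∈ Icc σ τ := Ioo_subset_Icc_self hy
      rw [hu'_eq x hxm, hu'_eq y hym]
      have hsub : ∀ c : ℝ, c ∈ Icc σ τ →
          IntervalIntegrable (fun ξ => a ξ * G (u ξ)) volume σ c := fun c hc =>
        hgg_ii.mono_set (by
          rw [uIcc_of_le hle, uIcc_of_le hc.1]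
          exact Icc_subset_Icc le_rfl hc.2)
      have hdiff : (∫ ξ in σ..y, a ξ * G (u ξ)) - ∫ ξ in σ..x, a ξ * G (u ξ)
          = ∫ ξ in x..y, a ξ * G (u ξ) :=
        intervalIntegral.integral_interval_sub_left (hsub y hym) (hsub x hxm)
      have hnn : 0 ≤ ∫ ξ in x..y, a ξ * G (u ξ) := by
        refine intervalIntegral.integral_nonneg hxy fun ξ hξ => ?_
        have hξm : ξ ∈ Icc σ τ := Icc_subset_Icc hxm.1 hym.2 hξ
        exact mul_nonneg (ha_nonneg ξ) (hG_nonneg _ (hu_range ξ hξm).1)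
      linarith
  -- chord bound
  obtain ⟨x₀, hx₀m, hx₀⟩ := hu_max
  have hchord : ∀ x ∈ Icc σ τ, r * min (x - σ) (τ - x) / (τ - σ) ≤ u x := fun x hx =>
    concave_chord hστ hconc huσ huτ hx₀m hr.le hx₀.ge hx
  -- Inequality 3
  have ineq3 : ρ * r / (τ - σ) * ∫ x in Ioc σ τ, min (x - σ) (τ - x) * a x * φ x
      ≤ ρ * Ifu := by
    have hmin_cont : ContinuousOn (fun x => r / (τ - σ) * (min (x - σ) (τ - x) * φ x))
        (Icc σ τ) := by
      apply ContinuousOn.mul continuousOn_const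
      exact (((continuous_id.sub continuous_const).min
        (continuous_const.sub continuous_id)).continuousOn).mul hφc
    have hL_int : IntegrableOn (fun x => r / (τ - σ) * (min (x - σ) (τ - x) * (a x * φ x)))
        (Ioc σ τ) := by
      have := aux_int hle ha_int hmin_cont
      exact this.congr_fun (fun x _ => by ring) measurableSet_Ioc
    have hmono : (∫ x in Ioc σ τ, r / (τ - σ) * (min (x - σ) (τ - x) * (a x * φ x)))
        ≤ Ifu := by
      refine setIntegral_mono_on hL_int hfu_int measurableSet_Ioc fun x hx => ?_
      have hxm : x ∈ Icc σ τ := Ioc_subset_Icc_self hx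
      have haφ : 0 ≤ a x * φ x := mul_nonneg (ha_nonneg x) (hφ_nonneg x hxm)
      have hc := hchord x hxm
      have := mul_le_mul_of_nonneg_right hc haφ
      calc r / (τ - σ) * (min (x - σ) (τ - x) * (a x * φ x))
          = r * min (x - σ) (τ - x) / (τ - σ) * (a x * φ x) := by ring
        _ ≤ u x * (a x * φ x) := this
        _ = a x * φ x * u x := by ring
    calc ρ * r / (τ - σ) * ∫ x in Ioc σ τ, min (x - σ) (τ - x) * a x * φ x
        = ρ * ∫ x in Ioc σ τ, r / (τ - σ) * (min (x - σ) (τ - x) * (a x * φ x)) := by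
          rw [integral_const_mul,
            show (∫ x in Ioc σ τ, min (x - σ) (τ - x) * (a x * φ x))
              = ∫ x in Ioc σ τ, min (x - σ) (τ - x) * a x * φ x from
              setIntegral_congr_fun measurableSet_Ioc fun x _ => by ring]
          ring
      _ ≤ ρ * Ifu := mul_le_mul_of_nonneg_left hmono hρ.le
  -- assemble
  rw [intervalIntegral.integral_of_le hle]
  have final : ρ * Ifu ≤ M * (u σ + u τ) := by
    calc ρ * Ifu ≤ lam * Ifu - Igφ := ineq1
      _ = u σ * φ' σ - u τ * φ' τ := star
      _ ≤ M * (u σ + u τ) := ineq2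
  linarith [ineq3]
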